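/- arXiv:2212.05364 — 3 statements merged into one kernel-verified Lean document; each statement's English description precedes it below -/
import Mathlib

section
/- Let m > 0, p ≥ 0, and q be reals with p − q > 2, and let 0 < w < 1, γ > 0. Then the double series ∑_{k=1}^∞ ∑_{t=0}^{k−1} w^{k−2−t}(k−t) · (m+k)^q · γ/(m+t)^p converges (is finite). -/
open Real

lemma double_series_aux (m p q γ w : ℝ) (hm : 0 < m) (hp : 0 ≤ p)
    (hw0 : 0 < w) (hγ : 0 < γ) (n : ℕ) (hn : p + 1 ≤ n) (k t : ℕ) (ht : t ≤ k) :
    w ^ (((k : ℤ) + 1) - 2 - t) * (((k : ℝ) + 1) - t) * (m + (k + 1)) ^ q *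
      (γ / (m + t) ^ p)
    ≤ (γ * w⁻¹ * (1 + 1 / m) ^ p) * (m + (k + 1)) ^ (q - p) *
        ((((k - t : ℕ) : ℝ) + 1) ^ n * w ^ (k - t)) := by
  have hmt : (0:ℝ) < m + t := by positivity
  have hmk : (0:ℝ) < m + (k + 1) := by positivity
  have hd : ((k - t : ℕ) : ℝ) = (k : ℝ) - t := by
    push_cast [Nat.cast_sub ht]; ring
  -- rewrite the zpow
  have hz : ((k : ℤ) + 1) - 2 - t = ((k - t : ℕ) : ℤ) - 1 := by
    push_cast [Nat.cast_sub ht]; ring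
  have hzpow : w ^ (((k : ℤ) + 1) - 2 - t) = w ^ (k - t) * w⁻¹ := by
    rw [hz, zpow_sub₀ hw0.ne', zpow_one, zpow_natCast, div_eq_mul_inv]
  -- rpow splitting
  have hsplit : (m + (k + 1)) ^ q * (m + t) ^ (-p)
      = (m + (k + 1)) ^ (q - p) * ((m + (k + 1)) / (m + t)) ^ p := by
    rw [Real.div_rpow hmk.le hmt.le, div_eq_mul_inv, ← Real.rpow_neg hmt.le,
      ← mul_assoc, ← Real.rpow_add hmk]
    ring_nf
  -- ratio bound
  have hdpos : (0:ℝ) ≤ ((k - t : ℕ) : ℝ) := by positivity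
  have hratio : (m + (k + 1)) / (m + t) ≤ (1 + 1 / m) * (((k - t : ℕ) : ℝ) + 1) := by
    have ht0 : (0:ℝ) ≤ (t:ℝ) := Nat.cast_nonneg t
    have key : m * (m + ((k:ℝ) + 1)) ≤ (m + 1) * (((k - t : ℕ) : ℝ) + 1) * (m + t) := by
      nlinarith [mul_nonneg (mul_nonneg hm.le hdpos) ht0,
        mul_nonneg hdpos ht0, mul_nonneg (mul_nonneg hm.le hm.le) hdpos,
        mul_nonneg hm.le (mul_nonneg hdpos ht0)]
    rw [div_le_iff₀ hmt, show (1:ℝ) + 1 / m = (m + 1) / m by field_simp,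
      div_mul_eq_mul_div, div_mul_eq_mul_div, le_div_iff₀ hm]
    nlinarith [key]
  have hratio_pow : ((m + (k + 1)) / (m + t)) ^ p
      ≤ (1 + 1 / m) ^ p * (((k - t : ℕ) : ℝ) + 1) ^ p := by
    rw [← Real.mul_rpow (by positivity) (by positivity)]
    exact Real.rpow_le_rpow (by positivity) hratio hp
  -- (d+1)^(p+1) ≤ (d+1)^n
  have hbase : (1:ℝ) ≤ ((k - t : ℕ) : ℝ) + 1 := by linarith
  have hpow_exp : (((k - t : ℕ) : ℝ) + 1) ^ (p + 1) ≤ (((k - t : ℕ) : ℝ) + 1) ^ (n:ℝ) :=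
    Real.rpow_le_rpow_of_exponent_le hbase hn
  have hpown : (((k - t : ℕ) : ℝ) + 1) ^ (n:ℝ) = (((k - t : ℕ) : ℝ) + 1) ^ n :=
    Real.rpow_natCast _ n
  -- assemble
  have hkt : ((k : ℝ) + 1) - t = ((k - t : ℕ) : ℝ) + 1 := by rw [hd]; ring
  rw [hzpow, hkt, div_eq_mul_inv γ, ← Real.rpow_neg hmt.le]
  set D : ℝ := ((k - t : ℕ) : ℝ) + 1 with hD
  have hDpos : (0:ℝ) < D := by positivity
  have hwk : (0:ℝ) ≤ w ^ (k - t) := by positivity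
  calc w ^ (k - t) * w⁻¹ * D * (m + (k + 1)) ^ q * (γ * (m + t) ^ (-p))
      = (γ * w⁻¹) * ((m + (k + 1)) ^ q * (m + t) ^ (-p)) * (D * w ^ (k - t)) := by ring
    _ = (γ * w⁻¹) * ((m + (k + 1)) ^ (q - p) * ((m + (k + 1)) / (m + t)) ^ p)
          * (D * w ^ (k - t)) := by rw [hsplit]
    _ ≤ (γ * w⁻¹) * ((m + (k + 1)) ^ (q - p) * ((1 + 1 / m) ^ p * D ^ p))
          * (D * w ^ (k - t)) := by
        have h1 : (0:ℝ) ≤ γ * w⁻¹ := by positivity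
        have h2 : (0:ℝ) ≤ (m + (k + 1)) ^ (q - p) := by positivity
        have h3 : (0:ℝ) ≤ D * w ^ (k - t) := by positivity
        exact mul_le_mul_of_nonneg_right
          (mul_le_mul_of_nonneg_left
            (mul_le_mul_of_nonneg_left hratio_pow h2) h1) h3
    _ = (γ * w⁻¹ * (1 + 1 / m) ^ p) * (m + (k + 1)) ^ (q - p)
          * ((D ^ p * D) * w ^ (k - t)) := by ring
    _ ≤ (γ * w⁻¹ * (1 + 1 / m) ^ p) * (m + (k + 1)) ^ (q - p)
          * (D ^ n * w ^ (k - t)) := by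
        have hC : (0:ℝ) ≤ γ * w⁻¹ * (1 + 1 / m) ^ p * (m + (k + 1)) ^ (q - p) := by
          positivity
        have hDp : D ^ p * D ≤ (D:ℝ) ^ n := by
          have : D ^ p * D = D ^ (p + 1) := by
            rw [Real.rpow_add hDpos, Real.rpow_one]
          rw [this, ← hpown]
          exact hpow_exp
        exact mul_le_mul_of_nonneg_left (mul_le_mul_of_nonneg_right hDp hwk) hC

set_option maxHeartbeats 1000000

/-- For reals `m > 0`, `p ≥ 0`, `q` with `p - q > 2`, and `0 < w < 1`, `γ > 0`, the
nonnegative double series `∑_{k=1}^∞ ∑_{t=0}^{k-1} w^(k-2-t) (k-t) (m+k)^q γ/(m+t)^p`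
converges. -/
theorem double_series_summable (m p q γ w : ℝ) (hm : 0 < m) (hp : 0 ≤ p) (hpq : p - q > 2)
    (hw0 : 0 < w) (hw1 : w < 1) (hγ : 0 < γ) :
    Summable (fun k : ℕ =>
      ∑ t ∈ Finset.range (k + 1),
        w ^ (((k : ℤ) + 1) - 2 - t) * (((k : ℝ) + 1) - t) * (m + (k + 1)) ^ q *
          (γ / (m + t) ^ p)) := by
  obtain ⟨n, hn⟩ : ∃ n : ℕ, p + 1 ≤ n := by
    refine ⟨⌈p⌉₊ + 1, ?_⟩
    have := Nat.le_ceil p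
    push_cast
    linarith
  set C : ℝ := γ * w⁻¹ * (1 + 1 / m) ^ p with hC_def
  have hC : 0 ≤ C := by positivity
  -- summability of (j+1)^n * w^j
  have hgeom : Summable (fun j : ℕ => ((j : ℝ) + 1) ^ n * w ^ j) := by
    have h0 : Summable (fun j : ℕ => (j : ℝ) ^ n * w ^ j) :=
      summable_pow_mul_geometric_of_norm_lt_one n (by rwa [Real.norm_eq_abs, abs_of_pos hw0])
    have h1 : Summable (fun j : ℕ => ((j + 1 : ℕ) : ℝ) ^ n * w ^ (j + 1)) :=
      (summable_nat_add_iff 1).mpr h0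
    have h2 := h1.mul_left w⁻¹
    refine h2.congr fun j => ?_
    push_cast
    rw [pow_succ', show w⁻¹ * (((j:ℝ) + 1) ^ n * (w * w ^ j)) = (w⁻¹ * w) * (((j:ℝ) + 1) ^ n * w ^ j)
      by ring, inv_mul_cancel₀ hw0.ne', one_mul]
  set S : ℝ := ∑' j : ℕ, ((j : ℝ) + 1) ^ n * w ^ j with hS_def
  -- summability of the majorant
  have hmaj : Summable (fun k : ℕ => C * S * (m + ((k : ℝ) + 1)) ^ (q - p)) := by
    have h0 : Summable (fun k : ℕ => ((k : ℝ)) ^ (q - p)) :=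
      Real.summable_nat_rpow.mpr (by linarith)
    have h1 : Summable (fun k : ℕ => (((k : ℕ) + 1 : ℕ) : ℝ) ^ (q - p)) :=
      (summable_nat_add_iff 1).mpr h0
    have h2 : Summable (fun k : ℕ => ((k : ℝ) + 1) ^ (q - p)) := by
      refine h1.congr fun k => ?_; push_cast; ring_nf
    have hSnn : 0 ≤ S := tsum_nonneg fun j => by positivity
    refine Summable.of_nonneg_of_le
      (fun k => mul_nonneg (mul_nonneg hC hSnn) (Real.rpow_nonneg (by positivity) _))
      (fun k => ?_) (h2.mul_left (C * S))
    have hkpos : (0:ℝ) < (k : ℝ) + 1 := by positivity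
    have hle : ((k : ℝ) + 1) ≤ m + ((k : ℝ) + 1) := by linarith
    have := Real.rpow_le_rpow_of_nonpos hkpos hle (by linarith : q - p ≤ 0)
    have hCS : 0 ≤ C * S := mul_nonneg hC hSnn
    exact mul_le_mul_of_nonneg_left this hCS
  refine Summable.of_nonneg_of_le (fun k => ?_) (fun k => ?_) hmaj
  · refine Finset.sum_nonneg fun t ht => ?_
    have ht' : t ≤ k := Nat.lt_succ_iff.mp (Finset.mem_range.mp ht)
    have h1 : (0:ℝ) < w ^ (((k : ℤ) + 1) - 2 - t) := zpow_pos hw0 _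
    have h2 : (0:ℝ) ≤ ((k : ℝ) + 1) - t := by
      have : (t : ℝ) ≤ k := Nat.cast_le.mpr ht'
      linarith
    have h3 : (0:ℝ) ≤ (m + ((k : ℝ) + 1)) ^ q := by positivity
    have h4 : (0:ℝ) ≤ γ / (m + (t : ℝ)) ^ p := by positivity
    positivity
  · -- bound the inner sum
    have hstep : ∀ t ∈ Finset.range (k + 1),
        w ^ (((k : ℤ) + 1) - 2 - t) * (((k : ℝ) + 1) - t) * (m + (k + 1)) ^ q *
          (γ / (m + t) ^ p)
        ≤ C * (m + ((k : ℝ) + 1)) ^ (q - p) *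
            ((((k - t : ℕ) : ℝ) + 1) ^ n * w ^ (k - t)) := fun t ht =>
      double_series_aux m p q γ w hm hp hw0 hγ n hn k t
        (Nat.lt_succ_iff.mp (Finset.mem_range.mp ht))
    calc (∑ t ∈ Finset.range (k + 1),
          w ^ (((k : ℤ) + 1) - 2 - t) * (((k : ℝ) + 1) - t) * (m + (k + 1)) ^ q *
            (γ / (m + t) ^ p))
        ≤ ∑ t ∈ Finset.range (k + 1),
            C * (m + ((k : ℝ) + 1)) ^ (q - p) *
              ((((k - t : ℕ) : ℝ) + 1) ^ n * w ^ (k - t)) := Finset.sum_le_sum hstep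
      _ = C * (m + ((k : ℝ) + 1)) ^ (q - p) *
            ∑ t ∈ Finset.range (k + 1), (((k - t : ℕ) : ℝ) + 1) ^ n * w ^ (k - t) := by
          rw [Finset.mul_sum]
      _ = C * (m + ((k : ℝ) + 1)) ^ (q - p) *
            ∑ j ∈ Finset.range (k + 1), (((j : ℕ) : ℝ) + 1) ^ n * w ^ j := by
          congr 1
          rw [← Finset.sum_range_reflect]
          refine Finset.sum_congr rfl fun j hj => ?_
          have hj' : j ≤ k := Nat.lt_succ_iff.mp (Finset.mem_range.mp hj)
          have e : k - (k + 1 - 1 - j) = j := by omega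
          rw [e]
      _ ≤ C * (m + ((k : ℝ) + 1)) ^ (q - p) * S := by
          have hCk : 0 ≤ C * (m + ((k : ℝ) + 1)) ^ (q - p) := by positivity
          refine mul_le_mul_of_nonneg_left ?_ hCk
          exact Summable.sum_le_tsum _ (fun j _ => by positivity) hgeom
      _ = C * S * (m + ((k : ℝ) + 1)) ^ (q - p) := by ring
end

section
/- Let 0 < p < l ≤ 1 be reals and define φ(ℓ) = ℓ^{l+p}/(ℓ+1)^l − ℓ^p for ℓ > 0. Then for all ℓ ≥ p/(l−p), φ'(ℓ) ≥ 0, i.e., φ is nondecreasing on [p/(l−p), ∞). -/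
/-- For reals `0 < p < l ≤ 1` and `φ ℓ = ℓ^(l+p)/(ℓ+1)^l - ℓ^p`, the derivative of `φ`
is nonnegative for all `ℓ ≥ p/(l-p)`, and `φ` is nondecreasing on `[p/(l-p), ∞)`. -/
theorem phi_monotone (p l : ℝ) (hp : 0 < p) (hpl : p < l) (hl : l ≤ 1) :
    (∀ ℓ : ℝ, p / (l - p) ≤ ℓ →
        0 ≤ deriv (fun x : ℝ => x ^ (l + p) / (x + 1) ^ l - x ^ p) ℓ) ∧
    MonotoneOn (fun x : ℝ => x ^ (l + p) / (x + 1) ^ l - x ^ p)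
      (Set.Ici (p / (l - p))) := by
  have hlp : 0 < l - p := sub_pos.2 hpl
  have ha : 0 < p / (l - p) := div_pos hp hlp
  -- derivative nonneg
  have key : ∀ ℓ : ℝ, p / (l - p) ≤ ℓ →
      0 ≤ deriv (fun x : ℝ => x ^ (l + p) / (x + 1) ^ l - x ^ p) ℓ := by
    intro ℓ hℓ
    have hℓ0 : 0 < ℓ := lt_of_lt_of_le ha hℓ
    have hℓ1 : 0 < ℓ + 1 := by linarith
    have h1 : HasDerivAt (fun x : ℝ => x ^ (l + p)) ((l + p) * ℓ ^ (l + p - 1)) ℓ :=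
      Real.hasDerivAt_rpow_const (Or.inl hℓ0.ne')
    have h2 : HasDerivAt (fun x : ℝ => (x + 1) ^ l) (1 * l * (ℓ + 1) ^ (l - 1)) ℓ :=
      ((hasDerivAt_id ℓ).add_const 1).rpow_const (Or.inl hℓ1.ne')
    have hBne : ((ℓ : ℝ) + 1) ^ l ≠ 0 := (Real.rpow_pos_of_pos hℓ1 l).ne'
    have h3 := h1.div h2 hBne
    have h4 : HasDerivAt (fun x : ℝ => x ^ p) (p * ℓ ^ (p - 1)) ℓ :=
      Real.hasDerivAt_rpow_const (Or.inl hℓ0.ne')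
    have h5 : HasDerivAt (fun x : ℝ => x ^ (l + p) / (x + 1) ^ l - x ^ p) _ ℓ := h3.sub h4
    rw [h5.deriv]
    -- abbreviations
    set A := ℓ ^ l with hA
    set B := (ℓ + 1) ^ l with hB
    have hApos : 0 < A := Real.rpow_pos_of_pos hℓ0 l
    have hBpos : 0 < B := Real.rpow_pos_of_pos hℓ1 l
    -- rewrite powers
    have e1 : ℓ ^ (l + p - 1) = A * ℓ ^ p / ℓ := by
      rw [eq_div_iff hℓ0.ne', hA, ← Real.rpow_add hℓ0, ← Real.rpow_add_one hℓ0.ne']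
      norm_num
    have e2 : ℓ ^ (l + p) = A * ℓ ^ p := by
      rw [hA, ← Real.rpow_add hℓ0]
    have e3 : (ℓ + 1) ^ (l - 1) = B / (ℓ + 1) := by
      rw [eq_div_iff hℓ1.ne', hB, ← Real.rpow_add_one hℓ1.ne']
      norm_num
    have e4 : ℓ ^ (p - 1) = ℓ ^ p / ℓ := by
      rw [eq_div_iff hℓ0.ne', ← Real.rpow_add_one hℓ0.ne']
      norm_num
    rw [e1, e2, e3, e4]
    have hP : 0 < ℓ ^ p := Real.rpow_pos_of_pos hℓ0 p
    -- key algebraic inequality: A * (ℓ+1) ≥ ℓ * B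
    have hkey : ℓ * B ≤ A * (ℓ + 1) := by
      have hs : ℓ / (ℓ + 1) ≤ (ℓ / (ℓ + 1)) ^ l := by
        have h01 : ℓ / (ℓ + 1) ≤ 1 := by
          rw [div_le_one hℓ1]; linarith
        have := Real.rpow_le_rpow_of_exponent_ge (div_pos hℓ0 hℓ1) h01 hl
        simpa using this
      rw [Real.div_rpow hℓ0.le hℓ1.le] at hs
      rw [div_le_div_iff₀ hℓ1 (Real.rpow_pos_of_pos hℓ1 l)] at hs
      linarith [hs]
    -- quadratic inequality from ℓ ≥ p/(l-p)
    have hq : p * (ℓ + 1) ^ 2 ≤ ℓ * (p * ℓ + l + p) := by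
      have : p ≤ (l - p) * ℓ := by
        rw [div_le_iff₀ hlp] at hℓ; linarith
      nlinarith
    -- combine: A * (p*ℓ + l + p) ≥ p * B * (ℓ + 1)
    have hmain : p * B * (ℓ + 1) ≤ A * (p * ℓ + l + p) := by
      have hc : 0 < p * ℓ + l + p := by nlinarith
      have h6 : p * B * (ℓ + 1) * (ℓ + 1) ≤ A * (p * ℓ + l + p) * (ℓ + 1) := by
        calc p * B * (ℓ + 1) * (ℓ + 1) = p * (ℓ + 1) ^ 2 * B := by ring
          _ ≤ ℓ * (p * ℓ + l + p) * B := by nlinarith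
          _ = (ℓ * B) * (p * ℓ + l + p) := by ring
          _ ≤ (A * (ℓ + 1)) * (p * ℓ + l + p) := by nlinarith
          _ = A * (p * ℓ + l + p) * (ℓ + 1) := by ring
      exact le_of_mul_le_mul_right h6 hℓ1
    -- finish: express deriv value
    have expand : ((l + p) * (A * ℓ ^ p / ℓ) * B - A * ℓ ^ p * (1 * l * (B / (ℓ + 1)))) / B ^ 2
        - p * (ℓ ^ p / ℓ)
        = (ℓ ^ p / (ℓ * B * (ℓ + 1))) * (A * (p * ℓ + l + p) - p * B * (ℓ + 1)) := by
      field_simp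
      ring
    rw [expand]
    have : 0 ≤ A * (p * ℓ + l + p) - p * B * (ℓ + 1) := by linarith
    positivity
  refine ⟨key, ?_⟩
  have hdiff : ∀ x ∈ Set.Ici (p / (l - p)),
      DifferentiableAt ℝ (fun x : ℝ => x ^ (l + p) / (x + 1) ^ l - x ^ p) x := by
    intro x hx
    have hx0 : 0 < x := lt_of_lt_of_le ha hx
    have hx1 : 0 < x + 1 := by linarith
    have d1 : DifferentiableAt ℝ (fun x : ℝ => x ^ (l + p)) x :=
      (Real.hasDerivAt_rpow_const (Or.inl hx0.ne')).differentiableAt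
    have d2 : DifferentiableAt ℝ (fun x : ℝ => (x + 1) ^ l) x :=
      (((hasDerivAt_id x).add_const 1).rpow_const (Or.inl hx1.ne')).differentiableAt
    have d3 : DifferentiableAt ℝ (fun x : ℝ => x ^ p) x :=
      (Real.hasDerivAt_rpow_const (Or.inl hx0.ne')).differentiableAt
    exact (d1.div d2 (Real.rpow_pos_of_pos hx1 l).ne').sub d3
  apply monotoneOn_of_deriv_nonneg (convex_Ici _)
  · exact fun x hx => (hdiff x hx).continuousAt.continuousWithinAt
  · intro x hx
    exact ((hdiff x (interior_subset hx)).differentiableWithinAt)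
  · intro x hx
    rw [interior_Ici] at hx
    exact key x (le_of_lt hx)
end

section
/- Let A be an irreducible nonnegative 3×3 matrix. Then ρ(A) < 1 if and only if A_{11} < 1, A_{22} < 1, A_{33} < 1, and det(I − A) > 0. -/
open Matrix


private noncomputable def detp (A : Matrix (Fin 3) (Fin 3) ℝ) (t : ℝ) : ℝ :=
  (t • (1 : Matrix (Fin 3) (Fin 3) ℝ) - A).det

private lemma detp_eq (A : Matrix (Fin 3) (Fin 3) ℝ) (t : ℝ) :
    detp A t =
      (t - A 0 0) * ((t - A 1 1) * (t - A 2 2) - A 1 2 * A 2 1)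
      - A 0 1 * (A 1 0 * (t - A 2 2) + A 1 2 * A 2 0)
      - A 0 2 * (A 1 0 * A 2 1 + (t - A 1 1) * A 2 0) := by
  simp [_root_.detp, Matrix.det_fin_three, Matrix.one_apply]
  ring

private lemma detp_cont (A : Matrix (Fin 3) (Fin 3) ℝ) : Continuous (detp A) := by
  have : detp A = fun t =>
      (t - A 0 0) * ((t - A 1 1) * (t - A 2 2) - A 1 2 * A 2 1)
      - A 0 1 * (A 1 0 * (t - A 2 2) + A 1 2 * A 2 0)
      - A 0 2 * (A 1 0 * A 2 1 + (t - A 1 1) * A 2 0) := funext (detp_eq A)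
  rw [this]; fun_prop

private lemma root_contra (A : Matrix (Fin 3) (Fin 3) ℝ)
    (hsr : spectralRadius ℂ (A.map (Complex.ofReal ·)) < 1)
    (r : ℝ) (hr : 1 ≤ r) (h : detp A r = 0) : False := by
  have hmem : (r : ℂ) ∈ spectrum ℂ (A.map (Complex.ofReal ·)) := by
    rw [spectrum.mem_iff, Matrix.isUnit_iff_isUnit_det, isUnit_iff_ne_zero, not_ne_iff,
      Algebra.algebraMap_eq_smul_one]
    have heq : ((r : ℂ) • (1 : Matrix (Fin 3) (Fin 3) ℂ) - A.map (Complex.ofReal ·))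
        = (r • (1 : Matrix (Fin 3) (Fin 3) ℝ) - A).map (Complex.ofReal ·) := by
      ext i j
      simp [Matrix.map_apply, Matrix.one_apply, Matrix.smul_apply, Matrix.sub_apply]
      split <;> simp
    rw [heq]
    have heq2 : ((r • (1 : Matrix (Fin 3) (Fin 3) ℝ) - A).map (Complex.ofReal ·))
        = Complex.ofRealHom.mapMatrix (r • (1 : Matrix (Fin 3) (Fin 3) ℝ) - A) := rfl
    rw [heq2, ← RingHom.map_det, show (r • (1 : Matrix (Fin 3) (Fin 3) ℝ) - A).det = 0 from h,
      map_zero]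
  have hle : (‖(r : ℂ)‖₊ : ENNReal) ≤ spectralRadius ℂ (A.map (Complex.ofReal ·)) :=
    le_iSup₂ (f := fun k _ => (‖k‖₊ : ENNReal)) _ hmem
  have h1 : (1 : ENNReal) ≤ (‖(r : ℂ)‖₊ : ENNReal) := by
    rw [ENNReal.one_le_coe_iff, ← NNReal.coe_le_coe, coe_nnnorm, Complex.norm_real,
      Real.norm_eq_abs, NNReal.coe_one]
    exact le_trans hr (le_abs_self r)
  exact absurd (lt_of_le_of_lt (le_trans h1 hle) hsr) (lt_irrefl _)

set_option maxHeartbeats 1000000 in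
set_option maxRecDepth 4000 in
private lemma detp_big_pos (A : Matrix (Fin 3) (Fin 3) ℝ) (hnonneg : ∀ i j, 0 ≤ A i j)
    (K : ℝ) (hK : K = 1 + (A 0 0 + A 0 1 + A 0 2 + A 1 0 + A 1 1 + A 1 2
      + A 2 0 + A 2 1 + A 2 2)) (t : ℝ) (ht : 10 * K ≤ t) : 0 < detp A t := by
  have n00 := hnonneg 0 0; have n01 := hnonneg 0 1; have n02 := hnonneg 0 2
  have n10 := hnonneg 1 0; have n11 := hnonneg 1 1; have n12 := hnonneg 1 2
  have n20 := hnonneg 2 0; have n21 := hnonneg 2 1; have n22 := hnonneg 2 2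
  have hK1 : 1 ≤ K := by rw [hK]; linarith
  have hKpos : 0 < K := by linarith
  have htpos : 0 < t := by linarith
  have b00 : A 0 0 ≤ K := by rw [hK]; linarith
  have b01 : A 0 1 ≤ K := by rw [hK]; linarith
  have b02 : A 0 2 ≤ K := by rw [hK]; linarith
  have b10 : A 1 0 ≤ K := by rw [hK]; linarith
  have b11 : A 1 1 ≤ K := by rw [hK]; linarith
  have b12 : A 1 2 ≤ K := by rw [hK]; linarith
  have b20 : A 2 0 ≤ K := by rw [hK]; linarith
  have b21 : A 2 1 ≤ K := by rw [hK]; linarith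
  have b22 : A 2 2 ≤ K := by rw [hK]; linarith
  rw [detp_eq]
  -- lower bound for the main product
  have h11 : 9 * K ≤ t - A 1 1 := by linarith
  have h22 : 9 * K ≤ t - A 2 2 := by linarith
  have h00 : t - K ≤ t - A 0 0 := by linarith
  have f1 : (9 * K) * (9 * K) ≤ (t - A 1 1) * (t - A 2 2) :=
    mul_le_mul h11 h22 (by positivity) (by linarith)
  have f2 : A 1 2 * A 2 1 ≤ K * K := mul_le_mul b12 b21 n21 hKpos.le
  have finner : 80 * (K * K) ≤ (t - A 1 1) * (t - A 2 2) - A 1 2 * A 2 1 := by nlinarith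
  have f3 : (t - K) * (80 * (K * K))
      ≤ (t - A 0 0) * ((t - A 1 1) * (t - A 2 2) - A 1 2 * A 2 1) :=
    mul_le_mul h00 finner (by positivity) (by linarith)
  -- upper bounds for the two subtracted terms
  have g1 : A 1 0 * (t - A 2 2) ≤ K * t :=
    mul_le_mul b10 (by linarith) (by linarith) hKpos.le
  have g2 : A 1 2 * A 2 0 ≤ K * K := mul_le_mul b12 b20 n20 hKpos.le
  have g3 : A 0 1 * (A 1 0 * (t - A 2 2) + A 1 2 * A 2 0) ≤ K * (K * t + K * K) := by
    apply mul_le_mul b01 (by linarith) _ hKpos.le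
    have : 0 ≤ A 1 0 * (t - A 2 2) := mul_nonneg n10 (by linarith)
    have : 0 ≤ A 1 2 * A 2 0 := mul_nonneg n12 n20
    linarith
  have g4 : A 1 0 * A 2 1 ≤ K * K := mul_le_mul b10 b21 n21 hKpos.le
  have g5 : (t - A 1 1) * A 2 0 ≤ t * K :=
    mul_le_mul (by linarith) b20 n20 htpos.le
  have g6 : A 0 2 * (A 1 0 * A 2 1 + (t - A 1 1) * A 2 0) ≤ K * (K * K + t * K) := by
    apply mul_le_mul b02 (by linarith) _ hKpos.le
    have : 0 ≤ A 1 0 * A 2 1 := mul_nonneg n10 n21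
    have : 0 ≤ (t - A 1 1) * A 2 0 := mul_nonneg (by linarith) n20
    linarith
  have hKKt : K * K * (10 * K) ≤ K * K * t :=
    mul_le_mul_of_nonneg_left ht (by positivity)
  nlinarith [f3, g3, g6, hKKt, hKpos, htpos]

private lemma detp_maxdiag_nonpos (A : Matrix (Fin 3) (Fin 3) ℝ)
    (hnonneg : ∀ i j, 0 ≤ A i j) :
    detp A (max (max (A 0 0) (A 1 1)) (A 2 2)) ≤ 0 := by
  obtain ⟨m, hm⟩ : ∃ m : ℝ, m = max (max (A 0 0) (A 1 1)) (A 2 2) := ⟨_, rfl⟩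
  rw [← hm, detp_eq]
  have h0 : A 0 0 ≤ m := hm ▸ le_max_of_le_left (le_max_left _ _)
  have h1 : A 1 1 ≤ m := hm ▸ le_max_of_le_left (le_max_right _ _)
  have h2 : A 2 2 ≤ m := hm ▸ le_max_right _ _
  have hprod : (m - A 0 0) * ((m - A 1 1) * (m - A 2 2)) = 0 := by
    rcases max_choice (max (A 0 0) (A 1 1)) (A 2 2) with h | h
    · rcases max_choice (A 0 0) (A 1 1) with h' | h'
      · have : m = A 0 0 := by rw [hm, h, h']
        rw [this]; ring
      · have : m = A 1 1 := by rw [hm, h, h']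
        rw [this]; ring
    · have : m = A 2 2 := by rw [hm, h]
      rw [this]; ring
  have e1 : 0 ≤ (m - A 0 0) * (A 1 2 * A 2 1) :=
    mul_nonneg (by linarith) (mul_nonneg (hnonneg 1 2) (hnonneg 2 1))
  have e2 : 0 ≤ A 0 1 * (A 1 0 * (m - A 2 2) + A 1 2 * A 2 0) :=
    mul_nonneg (hnonneg 0 1) (by
      have := mul_nonneg (hnonneg 1 0) (show (0:ℝ) ≤ m - A 2 2 by linarith)
      have := mul_nonneg (hnonneg 1 2) (hnonneg 2 0)
      linarith)
  have e3 : 0 ≤ A 0 2 * (A 1 0 * A 2 1 + (m - A 1 1) * A 2 0) :=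
    mul_nonneg (hnonneg 0 2) (by
      have := mul_nonneg (hnonneg 1 0) (hnonneg 2 1)
      have := mul_nonneg (show (0:ℝ) ≤ m - A 1 1 by linarith) (hnonneg 2 0)
      linarith)
  nlinarith [hprod, e1, e2, e3]

private lemma exists_root_ge (A : Matrix (Fin 3) (Fin 3) ℝ) (hnonneg : ∀ i j, 0 ≤ A i j)
    (u : ℝ) (hu : detp A u ≤ 0) : ∃ r, u ≤ r ∧ detp A r = 0 := by
  obtain ⟨K, hK⟩ : ∃ K : ℝ, K = 1 + (A 0 0 + A 0 1 + A 0 2 + A 1 0 + A 1 1 + A 1 2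
      + A 2 0 + A 2 1 + A 2 2) := ⟨_, rfl⟩
  obtain ⟨T, hT⟩ : ∃ T : ℝ, T = max u (10 * K) := ⟨_, rfl⟩
  have huT : u ≤ T := hT ▸ le_max_left _ _
  have hTpos : 0 < detp A T :=
    detp_big_pos A hnonneg K hK T (hT ▸ le_max_right _ _)
  have := intermediate_value_Icc huT (detp_cont A).continuousOn
  have h0mem : (0:ℝ) ∈ Set.Icc (detp A u) (detp A T) := ⟨hu, hTpos.le⟩
  obtain ⟨r, hrmem, hr⟩ := this h0mem
  exact ⟨r, hrmem.1, hr⟩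


private lemma det_one_sub_expand (A : Matrix (Fin 3) (Fin 3) ℝ) :
    (1 - A).det =
      (1 - A 0 0) * ((1 - A 1 1) * (1 - A 2 2) - A 1 2 * A 2 1)
      - A 0 1 * (A 1 0 * (1 - A 2 2) + A 1 2 * A 2 0)
      - A 0 2 * (A 1 0 * A 2 1 + (1 - A 1 1) * A 2 0) := by
  simp [Matrix.det_fin_three, Matrix.one_apply]
  ring

set_option maxHeartbeats 1000000 in
private lemma key_bound (A : Matrix (Fin 3) (Fin 3) ℝ)
    (hnonneg : ∀ i j, 0 ≤ A i j)
    (h0 : A 0 0 < 1) (h1 : A 1 1 < 1) (h2 : A 2 2 < 1)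
    (hdet : 0 < (1 - A).det) :
    spectralRadius ℂ (A.map (Complex.ofReal ·)) < 1 := by
  have hb := hnonneg 0 1
  have hc := hnonneg 0 2
  have hd := hnonneg 1 0
  have he := hnonneg 1 2
  have hf := hnonneg 2 0
  have hg := hnonneg 2 1
  have p0 : (0:ℝ) < 1 - A 0 0 := by linarith
  have p1 : (0:ℝ) < 1 - A 1 1 := by linarith
  have p2 : (0:ℝ) < 1 - A 2 2 := by linarith
  have hD := det_one_sub_expand A
  set D := (1 - A).det with hDdef
  have nn1 : 0 ≤ (1 - A 0 0) * (A 1 2 * A 2 1) := mul_nonneg p0.le (mul_nonneg he hg)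
  have nn2 : 0 ≤ A 0 1 * (A 1 2 * A 2 0) := mul_nonneg hb (mul_nonneg he hf)
  have nn3 : 0 ≤ A 0 2 * (A 1 0 * A 2 1) := mul_nonneg hc (mul_nonneg hd hg)
  have nn4 : 0 ≤ A 0 2 * ((1 - A 1 1) * A 2 0) := mul_nonneg hc (mul_nonneg p1.le hf)
  have nn5 : 0 ≤ A 0 1 * (A 1 0 * (1 - A 2 2)) := mul_nonneg hb (mul_nonneg hd p2.le)
  have minor_aux : ∀ u v : ℝ, 0 < u → 0 < v * u → 0 < v := by
    intro u v hu hvu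
    by_contra hv
    push_neg at hv
    nlinarith
  have hm2 : A 0 1 * A 1 0 < (1 - A 0 0) * (1 - A 1 1) := by
    have key : 0 < ((1 - A 0 0) * (1 - A 1 1) - A 0 1 * A 1 0) * (1 - A 2 2) := by
      nlinarith [hD, hdet, nn1, nn2, nn3, nn4]
    have := minor_aux _ _ p2 key
    linarith
  have hm0 : A 1 2 * A 2 1 < (1 - A 1 1) * (1 - A 2 2) := by
    have key : 0 < ((1 - A 1 1) * (1 - A 2 2) - A 1 2 * A 2 1) * (1 - A 0 0) := by
      nlinarith [hD, hdet, nn2, nn3, nn4, nn5]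
    have := minor_aux _ _ p0 key
    linarith
  have hm1 : A 0 2 * A 2 0 < (1 - A 0 0) * (1 - A 2 2) := by
    have key : 0 < ((1 - A 0 0) * (1 - A 2 2) - A 0 2 * A 2 0) * (1 - A 1 1) := by
      nlinarith [hD, hdet, nn1, nn2, nn3, nn5]
    have := minor_aux _ _ p1 key
    linarith
  -- the positive vector x (row sums of the adjugate of 1 - A)
  obtain ⟨x0, hx0def⟩ : ∃ x : ℝ, x = ((1 - A 1 1) * (1 - A 2 2) - A 1 2 * A 2 1)
      + (A 0 1 * (1 - A 2 2) + A 0 2 * A 2 1)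
      + (A 0 1 * A 1 2 + A 0 2 * (1 - A 1 1)) := ⟨_, rfl⟩
  obtain ⟨x1, hx1def⟩ : ∃ x : ℝ, x = (A 1 0 * (1 - A 2 2) + A 1 2 * A 2 0)
      + ((1 - A 0 0) * (1 - A 2 2) - A 0 2 * A 2 0)
      + ((1 - A 0 0) * A 1 2 + A 0 2 * A 1 0) := ⟨_, rfl⟩
  obtain ⟨x2, hx2def⟩ : ∃ x : ℝ, x = (A 1 0 * A 2 1 + (1 - A 1 1) * A 2 0)
      + ((1 - A 0 0) * A 2 1 + A 0 1 * A 2 0)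
      + ((1 - A 0 0) * (1 - A 1 1) - A 0 1 * A 1 0) := ⟨_, rfl⟩
  
  have hx0 : 0 < x0 := by
    rw [hx0def]
    have := mul_nonneg hb p2.le
    have := mul_nonneg hc hg
    have := mul_nonneg hb he
    have := mul_nonneg hc p1.le
    linarith
  have hx1 : 0 < x1 := by
    rw [hx1def]
    have := mul_nonneg hd p2.le
    have := mul_nonneg he hf
    have := mul_nonneg p0.le he
    have := mul_nonneg hc hd
    linarith
  have hx2 : 0 < x2 := by
    rw [hx2def]
    have := mul_nonneg hd hg
    have := mul_nonneg p1.le hf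
    have := mul_nonneg p0.le hg
    have := mul_nonneg hb hf
    linarith
  have hrow0 : A 0 0 * x0 + A 0 1 * x1 + A 0 2 * x2 = x0 - D := by
    rw [hx0def, hx1def, hx2def]; linear_combination hD
  have hrow1 : A 1 0 * x0 + A 1 1 * x1 + A 1 2 * x2 = x1 - D := by
    rw [hx0def, hx1def, hx2def]; linear_combination hD
  have hrow2 : A 2 0 * x0 + A 2 1 * x1 + A 2 2 * x2 = x2 - D := by
    rw [hx0def, hx1def, hx2def]; linear_combination hD
  -- nonnegativity of the row sums
  have hr0nn : 0 ≤ x0 - D := by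
    rw [← hrow0]
    have := mul_nonneg (hnonneg 0 0) hx0.le
    have := mul_nonneg hb hx1.le
    have := mul_nonneg hc hx2.le
    linarith
  -- the uniform bound s
  obtain ⟨s, hsdef⟩ : ∃ s : ℝ,
      s = max (max ((x0 - D)/x0) ((x1 - D)/x1)) ((x2 - D)/x2) := ⟨_, rfl⟩
  have hs_lt : s < 1 := by
    rw [hsdef]
    refine max_lt (max_lt ?_ ?_) ?_ <;>
      [exact (div_lt_one hx0).mpr (by linarith);
       exact (div_lt_one hx1).mpr (by linarith);
       exact (div_lt_one hx2).mpr (by linarith)]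
  have hs0 : x0 - D ≤ s * x0 := by
    have h : (x0 - D)/x0 ≤ s := hsdef ▸ le_max_of_le_left (le_max_left _ _)
    calc x0 - D = ((x0 - D)/x0) * x0 := by field_simp
    _ ≤ s * x0 := mul_le_mul_of_nonneg_right h hx0.le
  have hs1 : x1 - D ≤ s * x1 := by
    have h : (x1 - D)/x1 ≤ s := hsdef ▸ le_max_of_le_left (le_max_right _ _)
    calc x1 - D = ((x1 - D)/x1) * x1 := by field_simp
    _ ≤ s * x1 := mul_le_mul_of_nonneg_right h hx1.le
  have hs2 : x2 - D ≤ s * x2 := by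
    have h : (x2 - D)/x2 ≤ s := hsdef ▸ le_max_right _ _
    calc x2 - D = ((x2 - D)/x2) * x2 := by field_simp
    _ ≤ s * x2 := mul_le_mul_of_nonneg_right h hx2.le
  -- the weight vector
  obtain ⟨X, hXdef⟩ : ∃ X : Fin 3 → ℝ, X = ![x0, x1, x2] := ⟨_, rfl⟩
  have hXpos : ∀ j, 0 < X j := by
    intro j; fin_cases j <;> simp [hXdef] <;> assumption
  have hrowX : ∀ i, A i 0 * X 0 + A i 1 * X 1 + A i 2 * X 2 ≤ s * X i := by
    intro i
    fin_cases i <;> simp [hXdef] <;> linarith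
  -- every eigenvalue is bounded by s
  have hbound : ∀ lam ∈ spectrum ℂ (A.map (Complex.ofReal ·)), ‖lam‖ ≤ s := by
    intro lam hlam
    rw [spectrum.mem_iff, Matrix.isUnit_iff_isUnit_det, isUnit_iff_ne_zero, not_ne_iff,
      Algebra.algebraMap_eq_smul_one] at hlam
    obtain ⟨v, hv0, hv⟩ := Matrix.exists_mulVec_eq_zero_iff.mpr hlam
    have hvec : ∀ i, lam * v i
        = (A i 0 : ℂ) * v 0 + (A i 1 : ℂ) * v 1 + (A i 2 : ℂ) * v 2 := by
      intro i
      have h := congrFun hv i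
      simp [Matrix.sub_mulVec, Matrix.mulVec, dotProduct, Fin.sum_univ_three,
        Matrix.smul_apply, Matrix.one_apply, Matrix.map_apply] at h
      fin_cases i <;> simp at h ⊢ <;> linear_combination h
    -- pick the index maximizing ‖v j‖ / X j
    obtain ⟨i, -, hi⟩ := Finset.exists_max_image Finset.univ
      (fun j => ‖v j‖ / X j) ⟨0, Finset.mem_univ 0⟩
    obtain ⟨c, hcdef⟩ : ∃ c : ℝ, c = ‖v i‖ / X i := ⟨_, rfl⟩
    have hvb : ∀ j, ‖v j‖ ≤ c * X j := by
      intro j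
      have := hi j (Finset.mem_univ j)
      rw [div_le_iff₀ (hXpos j)] at this
      rw [hcdef]
      exact this
    have hcpos : 0 < c := by
      obtain ⟨k, hk⟩ := Function.ne_iff.mp hv0
      have hk' : 0 < ‖v k‖ := by simpa [norm_pos_iff] using hk
      have := hi k (Finset.mem_univ k)
      rw [hcdef]
      exact lt_of_lt_of_le (div_pos hk' (hXpos k)) this
    have hvi : ‖v i‖ = c * X i := by
      rw [hcdef, div_mul_cancel₀ _ (hXpos i).ne']
    have hvip : 0 < ‖v i‖ := by rw [hvi]; exact mul_pos hcpos (hXpos i)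
    have hnorm : ‖lam‖ * ‖v i‖ ≤ s * ‖v i‖ := by
      calc ‖lam‖ * ‖v i‖ = ‖lam * v i‖ := (norm_mul _ _).symm
      _ = ‖(A i 0 : ℂ) * v 0 + (A i 1 : ℂ) * v 1 + (A i 2 : ℂ) * v 2‖ := by rw [hvec i]
      _ ≤ ‖(A i 0 : ℂ) * v 0‖ + ‖(A i 1 : ℂ) * v 1‖ + ‖(A i 2 : ℂ) * v 2‖ := norm_add₃_le
      _ = A i 0 * ‖v 0‖ + A i 1 * ‖v 1‖ + A i 2 * ‖v 2‖ := by
          simp [norm_mul, Complex.norm_real, Real.norm_eq_abs,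
            abs_of_nonneg (hnonneg i 0), abs_of_nonneg (hnonneg i 1),
            abs_of_nonneg (hnonneg i 2)]
      _ ≤ A i 0 * (c * X 0) + A i 1 * (c * X 1) + A i 2 * (c * X 2) := by
          gcongr <;> [exact hnonneg i 0; exact hvb 0; exact hnonneg i 1; exact hvb 1;
            exact hnonneg i 2; exact hvb 2]
      _ = c * (A i 0 * X 0 + A i 1 * X 1 + A i 2 * X 2) := by ring
      _ ≤ c * (s * X i) := by
          exact mul_le_mul_of_nonneg_left (hrowX i) hcpos.le
      _ = s * (c * X i) := by ring
      _ = s * ‖v i‖ := by rw [hvi]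
    exact le_of_mul_le_mul_right (by linarith [hnorm]) hvip
  -- conclude
  have hle : spectralRadius ℂ (A.map (Complex.ofReal ·)) ≤ ENNReal.ofReal s := by
    refine iSup₂_le fun lam hlam => ?_
    rw [← enorm_eq_nnnorm, ← ofReal_norm]
    exact ENNReal.ofReal_le_ofReal (hbound lam hlam)
  exact lt_of_le_of_lt hle (ENNReal.ofReal_lt_one.mpr hs_lt)


/-- For an irreducible nonnegative 3×3 real matrix `A`, the spectral radius of `A` is
less than `1` iff `A₁₁ < 1`, `A₂₂ < 1`, `A₃₃ < 1`, and `det (I - A) > 0`. -/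
theorem spectral_radius_lt_one_iff (A : Matrix (Fin 3) (Fin 3) ℝ)
    (hnonneg : ∀ i j, 0 ≤ A i j)
    (hirred : ∀ i j, ∃ k : ℕ, 0 < k ∧ 0 < (A ^ k) i j) :
    spectralRadius ℂ (A.map (Complex.ofReal ·)) < 1 ↔
      A 0 0 < 1 ∧ A 1 1 < 1 ∧ A 2 2 < 1 ∧ 0 < (1 - A).det := by
  constructor
  · intro hsr
    have hmax : max (max (A 0 0) (A 1 1)) (A 2 2) < 1 := by
      by_contra hle
      push_neg at hle
      obtain ⟨r, hur, hr⟩ := exists_root_ge A hnonneg _ (detp_maxdiag_nonpos A hnonneg)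
      exact root_contra A hsr r (le_trans hle hur) hr
    have d0 : A 0 0 < 1 := lt_of_le_of_lt (le_max_of_le_left (le_max_left _ _)) hmax
    have d1 : A 1 1 < 1 := lt_of_le_of_lt (le_max_of_le_left (le_max_right _ _)) hmax
    have d2 : A 2 2 < 1 := lt_of_le_of_lt (le_max_right _ _) hmax
    refine ⟨d0, d1, d2, ?_⟩
    have h1A : (1 - A).det = detp A 1 := by rw [_root_.detp, one_smul]
    rw [h1A]
    rcases lt_trichotomy (detp A 1) 0 with h | h | h
    · obtain ⟨r, hur, hr⟩ := exists_root_ge A hnonneg 1 h.le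
      exact (root_contra A hsr r hur hr).elim
    · exact (root_contra A hsr 1 le_rfl h).elim
    · exact h
  · rintro ⟨h0, h1, h2, hdet⟩
    exact key_bound A hnonneg h0 h1 h2 hdet
end
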